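/- Let φ : ℝ → [0,∞) be even, radially decreasing, and bounded, let m be a finite nonnegative measure supported on a bounded set, M₀ = m(ℝ), and κ > 0. Suppose for each pair α < β in Ω the separation X_{βα}(t) = X_β(t) − X_α(t) satisfies Ẋ_{βα} = ψ_{βα} − κ ∫_{X_α}^{X_β} ∫_Ω φ(y − X_γ) dm_γ dy with trajectories preserving order, and ψ_{βα} ≥ 0. Then for all t ≥ 0: X_{βα}(t) ≥ (β−α) e^{−κ‖φ‖_∞ M₀ t} + (ψ_{βα}/(κ‖φ‖_∞ M₀))(1 − e^{−κ‖φ‖_∞ M₀ t}). -/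

import Mathlib

open Set intervalIntegral MeasureTheory Real

/-- Explicit lower bound on the separation of trajectories for a bounded kernel:
`X_{βα}(t) ≥ (β−α) e^{−κ‖φ‖_∞ M₀ t} + (ψ_{βα}/(κ‖φ‖_∞ M₀))(1 − e^{−κ‖φ‖_∞ M₀ t})`. -/
theorem separation_lower_bound_bounded_kernel
    (φ : ℝ → ℝ) (hφ0 : ∀ x, 0 ≤ φ x) (hφeven : ∀ x, φ (-x) = φ x)
    (hφdec : AntitoneOn φ (Ici 0))
    (C : ℝ) (hC : 0 < C) (hφbd : ∀ x, φ x ≤ C)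
    (Ω : Set ℝ) (hΩbdd : Bornology.IsBounded Ω)
    (m : Measure ℝ) [IsFiniteMeasure m] (hm : m (Ωᶜ) = 0)
    (M₀ : ℝ) (hM₀ : M₀ = (m Set.univ).toReal) (hM₀pos : 0 < M₀)
    (κ : ℝ) (hκ : 0 < κ)
    (ψ : ℝ → ℝ) (X : ℝ → ℝ → ℝ)
    (α β : ℝ) (hα : α ∈ Ω) (hβ : β ∈ Ω) (hαβ : α < β)
    (hX0 : X α 0 = α ∧ X β 0 = β)
    (hψ : 0 ≤ ψ β - ψ α)
    (hord : ∀ t ∈ Ici (0:ℝ), X α t ≤ X β t)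
    (hode : ∀ t ∈ Ici (0:ℝ),
      HasDerivAt (fun τ => X β τ - X α τ)
        ((ψ β - ψ α) - κ * ∫ y in (X α t)..(X β t), (∫ γ, φ (y - X γ t) ∂m)) t) :
    ∀ t ∈ Ici (0:ℝ),
      X β t - X α t ≥ (β - α) * exp (-(κ * C * M₀) * t)
        + (ψ β - ψ α) / (κ * C * M₀) * (1 - exp (-(κ * C * M₀) * t)) := by
  set k := κ * C * M₀ with hk
  have hkpos : 0 < k := by positivity
  set ψd := ψ β - ψ α with hψd
  set Z : ℝ → ℝ := fun τ => X β τ - X α τ with hZ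
  -- bound on the nested integral
  have hIbd : ∀ s ∈ Ici (0:ℝ),
      κ * (∫ y in (X α s)..(X β s), (∫ γ, φ (y - X γ s) ∂m)) ≤ k * Z s := by
    intro s hs
    have hab : X α s ≤ X β s := hord s hs
    have hinner : ∀ y : ℝ, (∫ γ, φ (y - X γ s) ∂m) ≤ C * M₀ := by
      intro y
      by_cases hint : Integrable (fun γ => φ (y - X γ s)) m
      · calc (∫ γ, φ (y - X γ s) ∂m) ≤ ∫ _γ, C ∂m :=
              integral_mono hint (integrable_const C) (fun γ => hφbd _)
          _ = C * M₀ := by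
              rw [MeasureTheory.integral_const, hM₀, smul_eq_mul, mul_comm]; rfl
      · rw [integral_undef hint]; positivity
    have houter : (∫ y in (X α s)..(X β s), (∫ γ, φ (y - X γ s) ∂m))
        ≤ C * M₀ * (X β s - X α s) := by
      by_cases hint : IntervalIntegrable (fun y => ∫ γ, φ (y - X γ s) ∂m)
          volume (X α s) (X β s)
      · calc (∫ y in (X α s)..(X β s), (∫ γ, φ (y - X γ s) ∂m))
            ≤ ∫ _y in (X α s)..(X β s), C * M₀ :=
              intervalIntegral.integral_mono_on hab hint (intervalIntegrable_const)
                (fun y _ => hinner y)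
          _ = C * M₀ * (X β s - X α s) := by
              rw [intervalIntegral.integral_const, smul_eq_mul]; ring
      · rw [intervalIntegral.integral_undef hint]
        have h0 : 0 ≤ X β s - X α s := sub_nonneg.2 hab
        positivity
    calc κ * (∫ y in (X α s)..(X β s), (∫ γ, φ (y - X γ s) ∂m))
        ≤ κ * (C * M₀ * (X β s - X α s)) := mul_le_mul_of_nonneg_left houter hκ.le
      _ = k * Z s := by rw [hk]; ring
  -- the auxiliary function W
  set W : ℝ → ℝ := fun τ => exp (k * τ) * Z τ - ((β - α) + ψd / k * (exp (k * τ) - 1))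
    with hW
  have hWd : ∀ s ∈ Ici (0:ℝ), HasDerivAt W
      (exp (k * s) * (k * Z s
        - κ * ∫ y in (X α s)..(X β s), (∫ γ, φ (y - X γ s) ∂m))) s := by
    intro s hs
    have hkτ : HasDerivAt (fun τ => k * τ) k s := by
      simpa using (hasDerivAt_id s).const_mul k
    have h1 : HasDerivAt (fun τ => exp (k * τ)) (exp (k * s) * k) s := hkτ.exp
    have h2 := hode s hs
    have h3 := (h1.mul h2).sub (((h1.sub_const 1).const_mul (ψd / k)).const_add (β - α))
    refine h3.congr_deriv ?_
    field_simp
    ring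
  have hWmono : MonotoneOn W (Ici 0) := by
    refine monotoneOn_of_deriv_nonneg (convex_Ici 0)
      (fun s hs => ((hWd s hs).continuousAt).continuousWithinAt)
      (fun s hs => ?_) (fun s hs => ?_)
    · rw [interior_Ici] at hs
      exact ((hWd s (mem_Ici.2 (mem_Ioi.1 hs).le)).differentiableAt).differentiableWithinAt
    · rw [interior_Ici] at hs
      rw [(hWd s (mem_Ici.2 (mem_Ioi.1 hs).le)).deriv]
      have h1 := hIbd s (mem_Ici.2 (mem_Ioi.1 hs).le)
      have h2 : 0 ≤ k * Z s
          - κ * ∫ y in (X α s)..(X β s), (∫ γ, φ (y - X γ s) ∂m) := sub_nonneg.2 h1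
      positivity
  have hW0 : W 0 = 0 := by
    simp only [hW, hZ, mul_zero, Real.exp_zero, one_mul, hX0.1, hX0.2]
    ring
  intro t ht
  have hWt : 0 ≤ W t := by
    have := hWmono (self_mem_Ici) ht ht
    linarith [hW0 ▸ this]
  have key : (β - α) + ψd / k * (exp (k * t) - 1) ≤ exp (k * t) * Z t := by
    simp only [hW] at hWt; linarith
  have hE : exp (-(κ * C * M₀) * t) = (exp (k * t))⁻¹ := by
    rw [hk, ← Real.exp_neg]; ring_nf
  rw [ge_iff_le, hE]
  have hEpos : 0 < exp (k * t) := exp_pos _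
  rw [← mul_le_mul_iff_of_pos_right hEpos]
  have hEinv : (exp (k * t))⁻¹ * exp (k * t) = 1 := inv_mul_cancel₀ hEpos.ne'
  have key' : (β - α) + ψd / k * (exp (k * t) - 1)
      ≤ exp (k * t) * (X β t - X α t) := key
  have h2 : ((β - α) * (exp (k * t))⁻¹ + ψd / k * (1 - (exp (k * t))⁻¹)) * exp (k * t)
      = (β - α) + ψd / k * (exp (k * t) - 1) := by
    field_simp
  linarith
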